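/- Assume that for every control the homogeneous atomistic and continuum states exist and are unique (write vᵃ(·) and vᶜ(·) for the resulting linear maps). Let ũᵃ be the atomistic solution, uᶜ* the continuum lifting of ũᵃ, and let (θᵃ_op, θᶜ_op) ∈ ℝ² × ℝ minimize J(θᵃ,θᶜ) = ½ Σ_{i=K}^{L} ((vᵃ(θᵃ)_i + uᵃ⁰_i) − (vᶜ(θᶜ)_i + uᶜ⁰_i))². Then, with rᵃ = (ũᵃ_{L−1}, ũᵃ_L) and rᶜ = ũᵃ_K, one has ( Σ_{i=K}^{L} ( vᵃ(rᵃ − θᵃ_op)_i − vᶜ(rᶜ − θᶜ_op)_i )² )^{1/2} ≤ ( Σ_{i=K}^{L} ( ũᵃ_i − uᶜ*_i )² )^{1/2}. -/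

import Mathlib

/-- the approximation error bound for the reduced-space minimizer
(Lemma `trace` of the paper). -/
theorem reduced_space_approximation_error (k1 k2 : ℝ)
    (hk1 : 0 < k1) (hk2 : k2 < 0) (hk : 0 < k1 + 4 * k2)
    (N K L : ℤ) (hN : 5 ≤ N) (hK : 0 < K) (hKL : K < L) (hL : L ≤ N - 1)
    (hL4 : 4 ≤ L)
    (f ua ua0 uc0 ucstar : ℤ → ℝ) (vA : ℝ × ℝ → ℤ → ℝ) (vC : ℝ → ℤ → ℝ)
    -- vA θa is a homogeneous atomistic state with control θa, for every θa
    (hvA : ∀ θa : ℝ × ℝ,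
      (∀ i, 2 ≤ i → i ≤ L - 2 →
        -k1 * (vA θa (i - 1) - 2 * vA θa i + vA θa (i + 1))
          - k2 * (vA θa (i - 2) - 2 * vA θa i + vA θa (i + 2)) = 0) ∧
      vA θa 0 = 0 ∧ vA θa 1 = 0 ∧ vA θa (L - 1) = θa.1 ∧ vA θa L = θa.2)
    -- and it is the unique such state
    (hvAuniq : ∀ (θa : ℝ × ℝ) (w : ℤ → ℝ),
      (∀ i, 2 ≤ i → i ≤ L - 2 →
        -k1 * (w (i - 1) - 2 * w i + w (i + 1))
          - k2 * (w (i - 2) - 2 * w i + w (i + 2)) = 0) →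
      w 0 = 0 → w 1 = 0 → w (L - 1) = θa.1 → w L = θa.2 →
      ∀ i, 0 ≤ i → i ≤ L → w i = vA θa i)
    -- vC θc is a homogeneous continuum state with control θc, for every θc
    (hvC : ∀ θc : ℝ,
      (∀ i, K + 1 ≤ i → i ≤ N - 2 →
        -(k1 + 4 * k2) * (vC θc (i - 1) - 2 * vC θc i + vC θc (i + 1)) = 0) ∧
      vC θc K = θc ∧ vC θc (N - 1) = 0)
    -- and it is the unique such state
    (hvCuniq : ∀ (θc : ℝ) (w : ℤ → ℝ),
      (∀ i, K + 1 ≤ i → i ≤ N - 2 →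
        -(k1 + 4 * k2) * (w (i - 1) - 2 * w i + w (i + 1)) = 0) →
      w K = θc → w (N - 1) = 0 →
      ∀ i, K ≤ i → i ≤ N - 1 → w i = vC θc i)
    -- ua is the atomistic solution
    (hua : ∀ i, 2 ≤ i → i ≤ N - 2 →
      -k1 * (ua (i - 1) - 2 * ua i + ua (i + 1))
        - k2 * (ua (i - 2) - 2 * ua i + ua (i + 2)) = f i)
    (hua0' : ua 0 = 0) (hua1 : ua 1 = 0) (huaN1 : ua (N - 1) = 0) (huaN : ua N = 0)
    -- ua0 is the particular atomistic state with homogeneous boundary data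
    (hua0 : ∀ i, 2 ≤ i → i ≤ L - 2 →
      -k1 * (ua0 (i - 1) - 2 * ua0 i + ua0 (i + 1))
        - k2 * (ua0 (i - 2) - 2 * ua0 i + ua0 (i + 2)) = f i)
    (hua00 : ua0 0 = 0) (hua01 : ua0 1 = 0) (hua0L1 : ua0 (L - 1) = 0)
    (hua0L : ua0 L = 0)
    -- uc0 is the particular continuum state with homogeneous boundary data
    (huc0 : ∀ i, K + 1 ≤ i → i ≤ N - 2 →
      -(k1 + 4 * k2) * (uc0 (i - 1) - 2 * uc0 i + uc0 (i + 1)) = f i)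
    (huc0K : uc0 K = 0) (huc0N : uc0 (N - 1) = 0)
    -- ucstar is the continuum lifting of ua
    (hucs : ∀ i, K + 1 ≤ i → i ≤ N - 2 →
      -(k1 + 4 * k2) * (ucstar (i - 1) - 2 * ucstar i + ucstar (i + 1)) = f i)
    (hucsK : ucstar K = ua K) (hucsN : ucstar (N - 1) = 0)
    -- (θa_op, θc_op) minimizes the reduced objective J
    (θaop : ℝ × ℝ) (θcop : ℝ)
    (hmin : ∀ (θa : ℝ × ℝ) (θc : ℝ),
      (1 / 2) * ∑ i ∈ Finset.Icc K L,
          ((vA θaop i + ua0 i) - (vC θcop i + uc0 i)) ^ 2 ≤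
        (1 / 2) * ∑ i ∈ Finset.Icc K L,
          ((vA θa i + ua0 i) - (vC θc i + uc0 i)) ^ 2) :
    Real.sqrt (∑ i ∈ Finset.Icc K L,
        (vA ((ua (L - 1), ua L) - θaop) i - vC (ua K - θcop) i) ^ 2) ≤
      Real.sqrt (∑ i ∈ Finset.Icc K L, (ua i - ucstar i) ^ 2) := by
  classical
  -- linearity of vA on [0,L]
  have linA : ∀ (a b : ℝ × ℝ) (s t : ℝ), ∀ i : ℤ, 0 ≤ i → i ≤ L →
      vA (s • a + t • b) i = s * vA a i + t * vA b i := by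
    intro a b s t i h0 hiL
    refine (hvAuniq (s • a + t • b) (fun j => s * vA a j + t * vA b j)
      ?_ ?_ ?_ ?_ ?_ i h0 hiL).symm
    · intro j h2 hjL
      have ha := (hvA a).1 j h2 hjL
      have hb := (hvA b).1 j h2 hjL
      linear_combination s * ha + t * hb
    · simp [(hvA a).2.1, (hvA b).2.1]
    · simp [(hvA a).2.2.1, (hvA b).2.2.1]
    · simp [(hvA a).2.2.2.1, (hvA b).2.2.2.1, smul_eq_mul]
    · simp [(hvA a).2.2.2.2, (hvA b).2.2.2.2, smul_eq_mul]
  -- linearity of vC on [K,N-1]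
  have linC : ∀ (a b : ℝ) (s t : ℝ), ∀ i : ℤ, K ≤ i → i ≤ N - 1 →
      vC (s * a + t * b) i = s * vC a i + t * vC b i := by
    intro a b s t i h0 hiL
    refine (hvCuniq (s * a + t * b) (fun j => s * vC a j + t * vC b j)
      ?_ ?_ ?_ i h0 hiL).symm
    · intro j h2 hjL
      have ha := (hvC a).1 j h2 hjL
      have hb := (hvC b).1 j h2 hjL
      linear_combination s * ha + t * hb
    · simp [(hvC a).2.1, (hvC b).2.1]
    · simp [(hvC a).2.2, (hvC b).2.2]
  -- decomposition of ua
  have huav : ∀ i : ℤ, 0 ≤ i → i ≤ L → ua i = vA (ua (L - 1), ua L) i + ua0 i := by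
    intro i h0 hiL
    have h := hvAuniq (ua (L - 1), ua L) (fun j => ua j - ua0 j)
      (by
        intro j h2 hjL
        have h1 := hua j h2 (by omega)
        have h2' := hua0 j h2 hjL
        linear_combination h1 - h2')
      (by simp [hua0', hua00]) (by simp [hua1, hua01])
      (by simp [hua0L1]) (by simp [hua0L]) i h0 hiL
    linarith
  -- decomposition of ucstar
  have hucv : ∀ i : ℤ, K ≤ i → i ≤ N - 1 → ucstar i = vC (ua K) i + uc0 i := by
    intro i h0 hiL
    have h := hvCuniq (ua K) (fun j => ucstar j - uc0 j)
      (by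
        intro j h2 hjL
        have h1 := hucs j h2 hjL
        have h2' := huc0 j h2 hjL
        linear_combination h1 - h2')
      (by simp [hucsK, huc0K]) (by simp [hucsN, huc0N]) i h0 hiL
    linarith
  set S := Finset.Icc K L with hS
  set d : ℤ → ℝ := fun i => (vA θaop i + ua0 i) - (vC θcop i + uc0 i) with hd
  set g : ℤ → ℝ := fun i => vA ((ua (L - 1), ua L) - θaop) i - vC (ua K - θcop) i with hg
  have hmem : ∀ i ∈ S, K ≤ i ∧ i ≤ L := by
    intro i hi
    exact Finset.mem_Icc.mp hi
  -- g splits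
  have hgsplit : ∀ i ∈ S, g i = (vA (ua (L - 1), ua L) i - vA θaop i)
      - (vC (ua K) i - vC θcop i) := by
    intro i hi
    obtain ⟨h1, h2⟩ := hmem i hi
    have e1 : (ua (L - 1), ua L) - θaop = (1 : ℝ) • (ua (L - 1), ua L) + (-1 : ℝ) • θaop := by
      module
    have e2 : ua K - θcop = (1 : ℝ) * ua K + (-1 : ℝ) * θcop := by ring
    have hA := linA (ua (L - 1), ua L) θaop 1 (-1) i (by omega) h2
    have hC := linC (ua K) θcop 1 (-1) i h1 (by omega)
    rw [hg]
    simp only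
    rw [e1, e2, hA, hC]
    ring
  -- error splits
  have hesplit : ∀ i ∈ S, ua i - ucstar i = d i + g i := by
    intro i hi
    obtain ⟨h1, h2⟩ := hmem i hi
    have hu := huav i (by omega) h2
    have hc := hucv i h1 (by omega)
    have hgs := hgsplit i hi
    rw [hd]
    simp only
    rw [hu, hc, hgs]
    ring
  -- minimization inequality, rewritten
  have hsum : ∀ t : ℝ, ∑ i ∈ S, (d i) ^ 2 ≤ ∑ i ∈ S, (d i + t * g i) ^ 2 := by
    intro t
    have h := hmin ((1 : ℝ) • θaop + t • ((ua (L - 1), ua L) - θaop))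
      (1 * θcop + t * (ua K - θcop))
    have h1 : ∑ i ∈ S, ((vA θaop i + ua0 i) - (vC θcop i + uc0 i)) ^ 2
        = ∑ i ∈ S, (d i) ^ 2 := rfl
    have h2 : ∑ i ∈ S,
        ((vA ((1 : ℝ) • θaop + t • ((ua (L - 1), ua L) - θaop)) i + ua0 i)
          - (vC (1 * θcop + t * (ua K - θcop)) i + uc0 i)) ^ 2
        = ∑ i ∈ S, (d i + t * g i) ^ 2 := by
      refine Finset.sum_congr rfl ?_
      intro i hi
      obtain ⟨hb1, hb2⟩ := hmem i hi
      have hA := linA θaop ((ua (L - 1), ua L) - θaop) 1 t i (by omega) hb2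
      have hC := linC θcop (ua K - θcop) 1 t i hb1 (by omega)
      rw [hA, hC, hd, hg]
      simp only
      ring
    rw [hS] at h1 h2
    rw [h1, h2] at h
    linarith
  have hexp : ∀ t : ℝ, ∑ i ∈ S, (d i + t * g i) ^ 2
      = ∑ i ∈ S, (d i) ^ 2 + 2 * t * (∑ i ∈ S, d i * g i)
        + t ^ 2 * ∑ i ∈ S, (g i) ^ 2 := by
    intro t
    rw [Finset.mul_sum, Finset.mul_sum, ← Finset.sum_add_distrib, ← Finset.sum_add_distrib]
    exact Finset.sum_congr rfl (fun i _ => by ring)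
  set P : ℝ := ∑ i ∈ S, d i * g i with hP
  set G : ℝ := ∑ i ∈ S, (g i) ^ 2 with hGdef
  have hGnn : 0 ≤ G := Finset.sum_nonneg (fun i _ => sq_nonneg _)
  have hineq : ∀ t : ℝ, 0 ≤ 2 * t * P + t ^ 2 * G := by
    intro t
    have h := hsum t
    rw [hexp t] at h
    linarith
  have hP0 : P = 0 := by
    have hG1 : (0 : ℝ) < G + 1 := by linarith
    have key := hineq (-(P / (G + 1)))
    have e1 : 2 * (-(P / (G + 1))) * P + (-(P / (G + 1))) ^ 2 * G
        = (-(P ^ 2) * (G + 2)) / (G + 1) ^ 2 := by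
      field_simp
      ring
    rw [e1, le_div_iff₀ (by positivity)] at key
    have hPsq : P ^ 2 = 0 := by nlinarith [sq_nonneg P]
    exact pow_eq_zero_iff (two_ne_zero) |>.mp hPsq
  have hE : ∑ i ∈ S, (ua i - ucstar i) ^ 2 = ∑ i ∈ S, (d i + g i) ^ 2 :=
    Finset.sum_congr rfl (fun i hi => by rw [hesplit i hi])
  have hE2 : ∑ i ∈ S, (d i + g i) ^ 2 = ∑ i ∈ S, (d i) ^ 2 + G := by
    calc ∑ i ∈ S, (d i + g i) ^ 2 = ∑ i ∈ S, (d i + 1 * g i) ^ 2 :=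
          Finset.sum_congr rfl (fun i _ => by ring)
      _ = ∑ i ∈ S, (d i) ^ 2 + 2 * 1 * P + 1 ^ 2 * G := hexp 1
      _ = ∑ i ∈ S, (d i) ^ 2 + G := by rw [hP0]; ring
  have hfin : G ≤ ∑ i ∈ S, (ua i - ucstar i) ^ 2 := by
    rw [hE, hE2]
    have : 0 ≤ ∑ i ∈ S, (d i) ^ 2 := Finset.sum_nonneg (fun i _ => sq_nonneg _)
    linarith
  exact Real.sqrt_le_sqrt hfin
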